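/- Let σ be a chord diagram with n ≥ 2 chords whose interlace graph is disconnected. Then there exists a connected component of the interlace graph, consisting of k chords with k < n, whose set of 2k endpoints is a cyclic interval, i.e. equals {a, a+1, …, a+2k−1} for some a ∈ ZMod (2n). -/

import Mathlib

/-- The open cyclic arc `(a, b)` in `ZMod (2n)`: the points `a + s` with `0 < s < t`,
where `t = (b - a).val` is the representative of `b - a` in `[0, 2n)`. -/
def arc (n : ℕ) (a b : ZMod (2 * n)) : Set (ZMod (2 * n)) :=
  {x | ∃ s : ℕ, 0 < s ∧ s < (b - a).val ∧ x = a + (s : ZMod (2 * n))}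

/-- Two chords with endpoints `{x1, x2}` and `{y1, y2}` are interlaced iff exactly
one of `y1`, `y2` lies in the arc `(x1, x2)`. -/
def Interlaced (n : ℕ) (x1 x2 y1 y2 : ZMod (2 * n)) : Prop :=
  Xor' (y1 ∈ arc n x1 x2) (y2 ∈ arc n x1 x2)

/-- Relation on points of the circle whose reflexive-transitive closure describes the
connected components of the interlace graph of `σ`: two points are related when they
belong to the same chord, or when their chords are interlaced. -/
def chordRel (n : ℕ) (σ : Equiv.Perm (ZMod (2 * n))) (a b : ZMod (2 * n)) : Prop :=
  b = σ a ∨ Interlaced n a (σ a) b (σ b)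

def cd (N X A : ℕ) : ℕ := if A ≤ X then X - A else X + N - A

lemma iff_of_not_xor {a b : Prop} (h : ¬ Xor' a b) : a ↔ b := by
  by_cases ha : a <;> by_cases hb : b <;> simp [Xor', ha, hb] at h ⊢

lemma geo_sym {N B C D : ℕ} (hB : 0 < B ∧ B < N) (hC : 0 < C ∧ C < N)
    (hD : 0 < D ∧ D < N) (hBD : B ≠ D) (hCD : C ≠ D)
    (h : Xor' (0 < C ∧ C < B) (0 < D ∧ D < B)) :
    Xor' (0 < cd N 0 C ∧ cd N 0 C < cd N D C) (0 < cd N B C ∧ cd N B C < cd N D C) := by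
  unfold cd Xor' Xor at *
  split_ifs <;> omega

lemma geo1 {N M Q1 Q2 R1 R2 : ℕ} (hM : 0 < M ∧ M < N)
    (hQ1 : 0 < Q1 ∧ Q1 < N ∧ Q1 ≠ M) (hQ2 : 0 < Q2 ∧ Q2 < N ∧ Q2 ≠ M)
    (hR1 : 0 < R1 ∧ R1 < N ∧ R1 ≠ M) (hR2 : 0 < R2 ∧ R2 < N ∧ R2 ≠ M)
    (hq : (0 < Q1 ∧ Q1 < M) ↔ (0 < Q2 ∧ Q2 < M))
    (hr : (0 < R1 ∧ R1 < M) ↔ (0 < R2 ∧ R2 < M))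
    (hx : Xor' (0 < cd N R1 Q1 ∧ cd N R1 Q1 < cd N Q2 Q1)
               (0 < cd N R2 Q1 ∧ cd N R2 Q1 < cd N Q2 Q1)) :
    ((0 < Q1 ∧ Q1 < M) ↔ (0 < R1 ∧ R1 < M)) := by
  unfold cd Xor' Xor at *
  split_ifs at * <;> omega

lemma geo2 {N L J S : ℕ} (hJ : 0 < J ∧ J < L - 1) (hS : L ≤ S ∧ S < N) :
    ¬(0 < cd N 0 J ∧ cd N 0 J < cd N S J) ∧
      (0 < cd N (L-1) J ∧ cd N (L-1) J < cd N S J) := by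
  unfold cd
  split_ifs <;> omega

lemma geo3 {N L Q1 Q2 R S : ℕ} (hQ1 : 0 < Q1 ∧ Q1 < L - 1) (hQ2 : 0 < Q2 ∧ Q2 < L - 1)
    (hR : L ≤ R ∧ R < N) (hS : L ≤ S ∧ S < N) :
    ¬ Xor' (0 < cd N R Q1 ∧ cd N R Q1 < cd N Q2 Q1)
           (0 < cd N S Q1 ∧ cd N S Q1 < cd N Q2 Q1) := by
  unfold cd Xor' Xor
  split_ifs <;> omega

section base
variable {n : ℕ} [NeZero (2 * n)]

lemma val_sub' (u v : ZMod (2 * n)) : (u - v).val = cd (2 * n) u.val v.val := by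
  unfold cd
  have hu := ZMod.val_lt u
  have hv := ZMod.val_lt v
  rw [sub_eq_add_neg, ZMod.val_add, ZMod.neg_val]
  split_ifs with h1 h2 h2
  · subst h1
    simp only [ZMod.val_zero] at h2 ⊢
    rw [Nat.add_zero, Nat.mod_eq_of_lt hu]
    omega
  · subst h1
    simp only [ZMod.val_zero] at h2 ⊢
    omega
  · have hv0 : 0 < v.val := by
      rcases Nat.eq_zero_or_pos v.val with h | h
      · exact absurd ((ZMod.val_eq_zero v).mp h) h1
      · exact h
    have : u.val + (2 * n - v.val) = 2 * n + (u.val - v.val) := by omega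
    rw [this, Nat.add_mod_left, Nat.mod_eq_of_lt (by omega)]
  · have hv0 : 0 < v.val := by
      rcases Nat.eq_zero_or_pos v.val with h | h
      · exact absurd ((ZMod.val_eq_zero v).mp h) h1
      · exact h
    rw [Nat.mod_eq_of_lt (by omega)]
    omega

lemma sub_coord (o u v : ZMod (2 * n)) :
    (u - v).val = cd (2 * n) (u - o).val (v - o).val := by
  rw [show u - v = (u - o) - (v - o) by ring, val_sub']

lemma coord_inj {o u v : ZMod (2 * n)} (h : (u - o).val = (v - o).val) : u = v := by
  have h2 : u - o = v - o := ZMod.val_injective _ h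
  linear_combination h2

omit [NeZero (2 * n)] in
lemma coord_eq_zero {o u : ZMod (2 * n)} : (u - o).val = 0 ↔ u = o := by
  rw [ZMod.val_eq_zero, sub_eq_zero]

lemma mem_arc_iff {x a b : ZMod (2 * n)} :
    x ∈ arc n a b ↔ 0 < (x - a).val ∧ (x - a).val < (b - a).val := by
  constructor
  · rintro ⟨s, hs0, hs, rfl⟩
    have hlt : s < 2 * n := lt_trans hs (ZMod.val_lt _)
    have h : (a + (s : ZMod (2 * n)) - a) = (s : ZMod (2 * n)) := by ring
    rw [h, ZMod.val_cast_of_lt hlt]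
    exact ⟨hs0, hs⟩
  · rintro ⟨h0, h1⟩
    refine ⟨(x - a).val, h0, h1, ?_⟩
    rw [ZMod.natCast_val, ZMod.cast_id]
    ring

lemma mem_arc_coord {o x a b : ZMod (2 * n)} :
    x ∈ arc n a b ↔ 0 < cd (2 * n) (x - o).val (a - o).val ∧
      cd (2 * n) (x - o).val (a - o).val < cd (2 * n) (b - o).val (a - o).val := by
  rw [mem_arc_iff, sub_coord o x a, sub_coord o b a]

omit [NeZero (2*n)] in
lemma coord_add_cast {a : ZMod (2 * n)} {s : ℕ} (h : s < 2 * n) :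
    ((a + (s : ZMod (2 * n))) - a).val = s := by
  rw [show a + (s : ZMod (2 * n)) - a = (s : ZMod (2 * n)) by ring, ZMod.val_cast_of_lt h]

lemma eq_add_coord (a b : ZMod (2 * n)) : b = a + (((b - a).val : ℕ) : ZMod (2 * n)) := by
  rw [ZMod.natCast_val, ZMod.cast_id]
  ring

lemma not_mem_arc_left {a b : ZMod (2 * n)} : a ∉ arc n a b := by
  rw [mem_arc_iff]
  simp

lemma not_mem_arc_right {a b : ZMod (2 * n)} : b ∉ arc n a b := by
  rw [mem_arc_iff]
  omega

variable {σ : Equiv.Perm (ZMod (2 * n))}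

lemma interlaced_symm {x1 x2 y1 y2 : ZMod (2 * n)} (h12 : x1 ≠ x2) (h34 : y1 ≠ y2)
    (h13 : y1 ≠ x1) (h14 : y1 ≠ x2) (h23 : y2 ≠ x1) (h24 : y2 ≠ x2) :
    Interlaced n x1 x2 y1 y2 → Interlaced n y1 y2 x1 x2 := by
  intro h
  have h00 : (x1 - x1).val = 0 := by simp
  have hB : 0 < (x2 - x1).val ∧ (x2 - x1).val < 2 * n :=
    ⟨by rw [Nat.pos_iff_ne_zero, Ne, coord_eq_zero]; exact fun hh => h12 hh.symm, ZMod.val_lt _⟩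
  have hC : 0 < (y1 - x1).val ∧ (y1 - x1).val < 2 * n :=
    ⟨by rw [Nat.pos_iff_ne_zero, Ne, coord_eq_zero]; exact h13, ZMod.val_lt _⟩
  have hD : 0 < (y2 - x1).val ∧ (y2 - x1).val < 2 * n :=
    ⟨by rw [Nat.pos_iff_ne_zero, Ne, coord_eq_zero]; exact h23, ZMod.val_lt _⟩
  have hBD : (x2 - x1).val ≠ (y2 - x1).val := fun hh => h24 (coord_inj hh.symm)
  have hCD : (y1 - x1).val ≠ (y2 - x1).val := fun hh => h34 (coord_inj hh)
  rw [Interlaced, mem_arc_iff, mem_arc_iff] at h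
  rw [Interlaced, mem_arc_coord (o := x1), mem_arc_coord (o := x1), h00]
  exact geo_sym hB hC hD hBD hCD h

lemma chordRel_symm (hinv : ∀ i, σ (σ i) = i) (hfix : ∀ i, σ i ≠ i) :
    Symmetric (chordRel n σ) := by
  intro a b h
  rcases h with h | h
  · left; rw [h, hinv]
  · have hmem : b ∈ arc n a (σ a) ∨ σ b ∈ arc n a (σ a) := by
      rcases h with ⟨h1, _⟩ | ⟨h1, _⟩
      · exact Or.inl h1
      · exact Or.inr h1
    have hba : b ≠ a := by
      rintro rfl
      rcases hmem with hm | hm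
      · exact not_mem_arc_left hm
      · exact not_mem_arc_right hm
    have hbsa : b ≠ σ a := by
      rintro rfl
      rcases hmem with hm | hm
      · exact not_mem_arc_right hm
      · rw [hinv a] at hm; exact not_mem_arc_left hm
    have h1 : σ b ≠ σ a := fun hh => hba (σ.injective hh)
    have h2 : σ b ≠ a := fun hh => hbsa (by rw [← hh, hinv])
    exact Or.inr (interlaced_symm (Ne.symm (hfix a)) (Ne.symm (hfix b)) hba hbsa h2 h1 h)

end base

section base2
variable {n : ℕ} [NeZero (2 * n)] {σ : Equiv.Perm (ZMod (2 * n))}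

lemma mem_comp_sigma (hinv : ∀ i, σ (σ i) = i) {x b : ZMod (2 * n)} :
    Relation.ReflTransGen (chordRel n σ) x b ↔ Relation.ReflTransGen (chordRel n σ) x (σ b) :=
  ⟨fun h => h.tail (Or.inl rfl), fun h => h.tail (Or.inl (hinv b).symm)⟩

lemma same_side (hinv : ∀ i, σ (σ i) = i) (hfix : ∀ i, σ i ≠ i)
    {x p : ZMod (2 * n)} (hp : ¬ Relation.ReflTransGen (chordRel n σ) x p) :
    ∀ {q}, Relation.ReflTransGen (chordRel n σ) x q →
      (q ∈ arc n p (σ p) ↔ x ∈ arc n p (σ p)) := by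
  have hsymm : Symmetric (Relation.ReflTransGen (chordRel n σ)) := by
    haveI : Std.Symm (chordRel n σ) := ⟨chordRel_symm hinv hfix⟩
    exact fun a b h => Std.Symm.symm a b h
  have hsp : ¬ Relation.ReflTransGen (chordRel n σ) x (σ p) :=
    fun h => hp ((mem_comp_sigma hinv).mpr h)
  intro q hq
  induction hq with
  | refl => exact Iff.rfl
  | @tail q r hxq hqr ih =>
    have hxr : Relation.ReflTransGen (chordRel n σ) x r := hxq.tail hqr
    have hnc : ∀ z, Relation.ReflTransGen (chordRel n σ) x z → ¬ chordRel n σ p z := by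
      intro z hz hc
      exact hp (hz.trans (hsymm (Relation.ReflTransGen.single hc)))
    have hcoord : ∀ z, Relation.ReflTransGen (chordRel n σ) x z →
        0 < (z - p).val ∧ (z - p).val < 2 * n ∧ (z - p).val ≠ (σ p - p).val := by
      intro z hz
      refine ⟨?_, ZMod.val_lt _, fun hh => hsp (by rwa [coord_inj hh] at hz)⟩
      rw [Nat.pos_iff_ne_zero, Ne, coord_eq_zero]
      rintro rfl
      exact hp hz
    have hiffq : q ∈ arc n p (σ p) ↔ σ q ∈ arc n p (σ p) :=
      iff_of_not_xor (fun hh => hnc q hxq (Or.inr hh))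
    have hiffr : r ∈ arc n p (σ p) ↔ σ r ∈ arc n p (σ p) :=
      iff_of_not_xor (fun hh => hnc r hxr (Or.inr hh))
    suffices hqr2 : (q ∈ arc n p (σ p) ↔ r ∈ arc n p (σ p)) by
      rw [← hqr2]; exact ih
    rcases hqr with rfl | hI
    · exact hiffq
    · have hM : 0 < (σ p - p).val ∧ (σ p - p).val < 2 * n := by
        constructor
        · rw [Nat.pos_iff_ne_zero, Ne, coord_eq_zero]; exact hfix p
        · exact ZMod.val_lt _
      have hq' := hcoord q hxq
      have hσq' := hcoord (σ q) ((mem_comp_sigma hinv).mp hxq)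
      have hr' := hcoord r hxr
      have hσr' := hcoord (σ r) ((mem_comp_sigma hinv).mp hxr)
      rw [Interlaced, mem_arc_coord (o := p), mem_arc_coord (o := p)] at hI
      rw [mem_arc_iff, mem_arc_iff]
      rw [mem_arc_iff, mem_arc_iff] at hiffq hiffr
      exact geo1 hM ⟨hq'.1, hq'.2.1, hq'.2.2⟩ ⟨hσq'.1, hσq'.2.1, hσq'.2.2⟩
        ⟨hr'.1, hr'.2.1, hr'.2.2⟩ ⟨hσr'.1, hσr'.2.1, hσr'.2.2⟩ hiffq hiffr hI

end base2

lemma even_card_of_involution {α : Type*} [DecidableEq α] (s : Finset α) (f : α → α)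
    (h1 : ∀ x ∈ s, f x ∈ s) (h2 : ∀ x ∈ s, f (f x) = x) (h3 : ∀ x ∈ s, f x ≠ x) :
    Even s.card := by
  induction s using Finset.strongInduction with
  | _ s ih =>
    rcases Finset.eq_empty_or_nonempty s with rfl | ⟨x, hx⟩
    · simp
    · have hfx : f x ∈ s := h1 x hx
      have hne : f x ≠ x := h3 x hx
      set t := (s.erase x).erase (f x) with ht
      have hmem : ∀ y, y ∈ t ↔ (y ∈ s ∧ y ≠ x ∧ y ≠ f x) := by
        intro y
        simp only [ht, Finset.mem_erase]
        tauto
      have htsub : t ⊂ s := by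
        refine Finset.ssubset_iff_of_subset (fun y hy => ((hmem y).mp hy).1) |>.mpr ⟨x, hx, ?_⟩
        rw [hmem]
        tauto
      have hcard : t.card = s.card - 2 := by
        rw [ht, Finset.card_erase_of_mem, Finset.card_erase_of_mem hx]
        · omega
        · exact Finset.mem_erase.mpr ⟨hne, hfx⟩
      have heven : Even t.card := by
        refine ih t htsub (fun y hy => ?_) (fun y hy => h2 y ((hmem y).mp hy).1)
          (fun y hy => h3 y ((hmem y).mp hy).1)
        rw [hmem] at hy ⊢
        obtain ⟨hys, hyx, hyfx⟩ := hy
        exact ⟨h1 y hys, fun hh => hyfx (by rw [← hh, h2 y hys]),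
          fun hh => hyx (by have h5 := congrArg f hh; rwa [h2 y hys, h2 x hx] at h5)⟩
      have h2le : 2 ≤ s.card := by
        have hsub2 : ({x, f x} : Finset α) ⊆ s := by
          intro y hy
          simp only [Finset.mem_insert, Finset.mem_singleton] at hy
          rcases hy with rfl | rfl
          exacts [hx, hfx]
        calc 2 = ({x, f x} : Finset α).card := (Finset.card_pair hne.symm).symm
          _ ≤ s.card := Finset.card_le_card hsub2
      obtain ⟨m, hm⟩ := heven
      exact ⟨m + 1, by omega⟩

/-- If the interlace graph of a chord diagram `σ` with `n ≥ 2` chords is disconnected,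
then some connected component, consisting of `k < n` chords, has its `2k` endpoints
forming a cyclic interval `{a, a+1, …, a+2k−1}`. -/
theorem stmt19 (n : ℕ) (hn : 2 ≤ n) (σ : Equiv.Perm (ZMod (2 * n)))
    (hinv : ∀ i, σ (σ i) = i) (hfix : ∀ i, σ i ≠ i)
    (hdisc : ∃ u w : ZMod (2 * n), ¬ Relation.ReflTransGen (chordRel n σ) u w) :
    ∃ (x a : ZMod (2 * n)) (k : ℕ), 0 < k ∧ k < n ∧
      {b : ZMod (2 * n) | Relation.ReflTransGen (chordRel n σ) x b} =
        {c : ZMod (2 * n) | ∃ s : ℕ, s < 2 * k ∧ c = a + (s : ZMod (2 * n))} := by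
  haveI : NeZero (2 * n) := ⟨by omega⟩
  classical
  obtain ⟨u, w, huw⟩ := hdisc
  have hsymm : Symmetric (Relation.ReflTransGen (chordRel n σ)) := by
    haveI : Std.Symm (chordRel n σ) := ⟨chordRel_symm hinv hfix⟩
    exact fun a b h => Std.Symm.symm a b h
  have hP0 : ∃ x a : ZMod (2 * n), ∀ b, Relation.ReflTransGen (chordRel n σ) x b →
      (b - a).val < 2 * n - 1 := by
    refine ⟨u, w + 1, fun b hb => ?_⟩
    have hbw : b ≠ w := fun hh => huw (hh ▸ hb)
    have hval := ZMod.val_lt (b - (w + 1))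
    rcases Nat.lt_or_ge (b - (w + 1)).val (2 * n - 1) with h | h
    · exact h
    · exfalso
      have hEq : (b - (w + 1)).val = 2 * n - 1 := by omega
      have hm1 : ((2 * n - 1 : ℕ) : ZMod (2 * n)) = -1 := by
        rw [Nat.cast_sub (by omega : 1 ≤ 2 * n)]
        simp
      have hcast : b = (w + 1) + (((2 * n - 1 : ℕ)) : ZMod (2 * n)) := by
        rw [← hEq]; exact eq_add_coord _ b
      exact hbw (by rw [hcast, hm1]; ring)
  have hPex : ∃ L : ℕ, ∃ x a : ZMod (2 * n), ∀ b, Relation.ReflTransGen (chordRel n σ) x b →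
      (b - a).val < L := ⟨2 * n - 1, hP0⟩
  set L := Nat.find hPex with hLdef
  obtain ⟨x, a, hsub⟩ := Nat.find_spec hPex
  have hmin : ∀ m, m < L → ¬ ∃ x a : ZMod (2 * n),
      ∀ b, Relation.ReflTransGen (chordRel n σ) x b → (b - a).val < m :=
    fun m hm => Nat.find_min hPex hm
  have hLle : L ≤ 2 * n - 1 := Nat.find_min' hPex hP0
  have hL1 : 1 ≤ L := by
    have := hsub x Relation.ReflTransGen.refl
    omega
  have hone : ((a + 1) - a).val = 1 := by
    rw [show a + 1 - a = ((1 : ℕ) : ZMod (2 * n)) by push_cast; ring,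
      ZMod.val_cast_of_lt (by omega)]
  have ha : Relation.ReflTransGen (chordRel n σ) x a := by
    by_contra hna
    refine hmin (L - 1) (by omega) ⟨x, a + 1, fun b hb => ?_⟩
    have hb1 := hsub b hb
    have hb0 : (b - a).val ≠ 0 := fun hh => hna (by rwa [coord_eq_zero.mp hh] at hb)
    rw [sub_coord a b (a + 1), hone]
    unfold cd; split_ifs <;> omega
  have hv : Relation.ReflTransGen (chordRel n σ) x (a + ((L - 1 : ℕ) : ZMod (2 * n))) := by
    by_contra hnv
    refine hmin (L - 1) (by omega) ⟨x, a, fun b hb => ?_⟩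
    have hb1 := hsub b hb
    have hbne : (b - a).val ≠ L - 1 := by
      intro hh
      apply hnv
      rw [show a + ((L - 1 : ℕ) : ZMod (2 * n)) = b from by rw [← hh]; exact (eq_add_coord a b).symm]
      exact hb
    omega
  have hfull : ∀ s : ℕ, s < L → Relation.ReflTransGen (chordRel n σ) x (a + (s : ZMod (2 * n))) := by
    by_contra hcon
    push_neg at hcon
    obtain ⟨s₀, hs₀L, hp⟩ := hcon
    have hs₀lt : s₀ < 2 * n := by omega
    have hcp : ((a + (s₀ : ZMod (2 * n))) - a).val = s₀ := coord_add_cast hs₀lt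
    set p := a + (s₀ : ZMod (2 * n)) with hpdef
    have hs₀0 : 0 < s₀ := by
      rcases Nat.eq_zero_or_pos s₀ with rfl | h
      · exact absurd (by rw [hpdef]; simpa using ha) hp
      · exact h
    have hs₀v : s₀ < L - 1 := by
      have hne : s₀ ≠ L - 1 := fun hh => hp (by rw [hpdef, hh]; exact hv)
      omega
    have claimB : ∀ z, ¬ Relation.ReflTransGen (chordRel n σ) x z →
        0 < (z - a).val → (z - a).val < L - 1 →
        0 < (σ z - a).val ∧ (σ z - a).val < L - 1 := by
      intro z hz h1 h2
      have hsz : ¬ Relation.ReflTransGen (chordRel n σ) x (σ z) :=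
        fun h => hz ((mem_comp_sigma hinv).mpr h)
      have hσ0 : 0 < (σ z - a).val := by
        rw [Nat.pos_iff_ne_zero, Ne, coord_eq_zero]
        intro hh
        exact hsz (hh ▸ ha)
      refine ⟨hσ0, ?_⟩
      by_contra hge
      have hσne : (σ z - a).val ≠ L - 1 := by
        intro hh
        apply hsz
        rw [show σ z = a + ((L - 1 : ℕ) : ZMod (2 * n)) from by
          rw [← hh]; exact eq_add_coord a (σ z)]
        exact hv
      have hσge : L ≤ (σ z - a).val := by omega
      have hgeo := geo2 (N := 2 * n) (L := L) ⟨h1, h2⟩ ⟨hσge, ZMod.val_lt _⟩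
      have h00 : (a - a).val = 0 := by simp
      have hvv : ((a + ((L - 1 : ℕ) : ZMod (2 * n))) - a).val = L - 1 :=
        coord_add_cast (by omega)
      have hmema : a ∉ arc n z (σ z) := by
        rw [mem_arc_coord (o := a), h00]
        exact hgeo.1
      have hmemv : (a + ((L - 1 : ℕ) : ZMod (2 * n))) ∈ arc n z (σ z) := by
        rw [mem_arc_coord (o := a), hvv]
        exact hgeo.2
      have hs1 := same_side hinv hfix hz ha
      have hs2 := same_side hinv hfix hz hv
      rw [hs2] at hmemv
      exact hmema (hs1.mpr hmemv)
    have hpsym : ∀ b, Relation.ReflTransGen (chordRel n σ) p b →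
        ¬ Relation.ReflTransGen (chordRel n σ) x b := by
      intro b hb hxb
      exact hp (hxb.trans (hsymm hb))
    have claimC : ∀ b, Relation.ReflTransGen (chordRel n σ) p b →
        0 < (b - a).val ∧ (b - a).val < L - 1 := by
      intro b hb
      induction hb with
      | refl => rw [hcp]; exact ⟨hs₀0, hs₀v⟩
      | @tail q r hpq hqr ih =>
        have hq' : ¬ Relation.ReflTransGen (chordRel n σ) x q := hpsym q hpq
        have hpr : Relation.ReflTransGen (chordRel n σ) p r := hpq.tail hqr
        have hr' : ¬ Relation.ReflTransGen (chordRel n σ) x r := hpsym r hpr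
        rcases hqr with rfl | hI
        · exact claimB q hq' ih.1 ih.2
        · by_contra hcon2
          have hr0 : 0 < (r - a).val := by
            rw [Nat.pos_iff_ne_zero, Ne, coord_eq_zero]
            intro hh
            exact hr' (hh ▸ ha)
          have hrne : (r - a).val ≠ L - 1 := by
            intro hh
            apply hr'
            rw [show r = a + ((L - 1 : ℕ) : ZMod (2 * n)) from by
              rw [← hh]; exact eq_add_coord a r]
            exact hv
          have hrge : L ≤ (r - a).val := by omega
          have hσr' : ¬ Relation.ReflTransGen (chordRel n σ) x (σ r) :=
            fun h => hr' ((mem_comp_sigma hinv).mpr h)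
          have hσr0 : 0 < (σ r - a).val := by
            rw [Nat.pos_iff_ne_zero, Ne, coord_eq_zero]
            intro hh
            exact hσr' (hh ▸ ha)
          have hσrnotin : ¬ ((σ r - a).val < L - 1) := by
            intro hh
            have hB := claimB (σ r) hσr' hσr0 hh
            rw [hinv r] at hB
            exact hcon2 hB
          have hσrne : (σ r - a).val ≠ L - 1 := by
            intro hh
            apply hσr'
            rw [show σ r = a + ((L - 1 : ℕ) : ZMod (2 * n)) from by
              rw [← hh]; exact eq_add_coord a (σ r)]
            exact hv
          have hσrge : L ≤ (σ r - a).val := by omega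
          have hσq := claimB q hq' ih.1 ih.2
          rw [Interlaced, mem_arc_coord (o := a), mem_arc_coord (o := a)] at hI
          exact geo3 (N := 2 * n) (L := L) ⟨ih.1, ih.2⟩ ⟨hσq.1, hσq.2⟩
            ⟨hrge, ZMod.val_lt _⟩ ⟨hσrge, ZMod.val_lt _⟩ hI
    refine hmin (L - 2) (by omega) ⟨p, a + 1, fun b hb => ?_⟩
    have hc := claimC b hb
    rw [sub_coord a b (a + 1), hone]
    unfold cd; split_ifs <;> omega
  have hset : {b : ZMod (2 * n) | Relation.ReflTransGen (chordRel n σ) x b} =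
      {c : ZMod (2 * n) | ∃ s : ℕ, s < L ∧ c = a + (s : ZMod (2 * n))} := by
    ext b
    simp only [Set.mem_setOf_eq]
    constructor
    · intro hb
      exact ⟨(b - a).val, hsub b hb, eq_add_coord a b⟩
    · rintro ⟨s, hs, rfl⟩
      exact hfull s hs
  set F : Finset (ZMod (2 * n)) := (Finset.range L).image (fun s : ℕ => a + (s : ZMod (2 * n)))
    with hF
  have hmemF : ∀ z, z ∈ F ↔ Relation.ReflTransGen (chordRel n σ) x z := by
    intro z
    simp only [hF, Finset.mem_image, Finset.mem_range]
    constructor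
    · rintro ⟨s, hs, rfl⟩
      exact hfull s hs
    · intro hz
      exact ⟨(z - a).val, hsub z hz, (eq_add_coord a z).symm⟩
  have hcardF : F.card = L := by
    rw [hF, Finset.card_image_of_injOn, Finset.card_range]
    intro s hs t ht hst
    simp only [Finset.coe_range, Set.mem_Iio] at hs ht
    have hst2 : ((s : ℕ) : ZMod (2 * n)) = ((t : ℕ) : ZMod (2 * n)) := by
      have := hst
      simpa using add_left_cancel this
    have := congrArg ZMod.val hst2
    rwa [ZMod.val_cast_of_lt (by omega), ZMod.val_cast_of_lt (by omega)] at this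
  have hEvenL : Even L := by
    rw [← hcardF]
    refine even_card_of_involution F σ ?_ ?_ ?_
    · intro z hz
      rw [hmemF] at hz ⊢
      exact (mem_comp_sigma hinv).mp hz
    · intro z _
      exact hinv z
    · intro z _
      exact hfix z
  obtain ⟨k, hk⟩ := hEvenL
  refine ⟨x, a, k, by omega, by omega, ?_⟩
  rw [show 2 * k = L from by omega]
  exact hset
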